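/- Suppose the Ellis enveloping semigroup E(Ω,φ) is metrizable. Let (I, ≤) be a directed set and let (T_i)_{i∈I} be a net of operators from the convex hull of {V^n : n ≥ 0} such that ⟨x, T_i μ⟩ − ⟨x, T_i(Vμ)⟩ → 0 for all x ∈ C(Ω,ℝ) and μ ∈ X* (an ergodic net). If for every x ∈ C(Ω,ℝ) and every ω ∈ Ω the net of real numbers ⟨x, T_i δ(ω)⟩ converges, then for every x ∈ C(Ω,ℝ) and every μ ∈ X* the net ⟨x, T_i μ⟩ converges; that is, the net (T_i) converges in the weak* operator topology. -/

import Mathlib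

open MeasureTheory Filter Topology

/-- The pairing `⟨f, μ⟩ = ∫ f dμ` of a function with a finite signed Borel measure,
defined via the Jordan decomposition of the signed measure. -/
noncomputable def spair {Ω : Type*} [MeasurableSpace Ω] (f : Ω → ℝ) (μ : SignedMeasure Ω) : ℝ :=
  (∫ ω, f ω ∂μ.toJordanDecomposition.posPart) - (∫ ω, f ω ∂μ.toJordanDecomposition.negPart)

/-- The weak* topology on the space `X*` of finite signed Borel measures, i.e. the topology
of convergence of the pairings with all continuous functions `x ∈ C(Ω, ℝ)`. With this topology
on the codomain, the product topology on `SignedMeasure Ω → SignedMeasure Ω` is precisely the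
weak* operator topology (pointwise convergence with `X*` in its weak* topology). -/
noncomputable instance weakStarTopology {Ω : Type*} [TopologicalSpace Ω] [MeasurableSpace Ω] :
    TopologicalSpace (SignedMeasure Ω) :=
  TopologicalSpace.induced (fun μ => fun x : C(Ω, ℝ) => spair (⇑x) μ) inferInstance

/-- The operator `V : X* → X*`, pushforward by `φ`: `(Vμ)(e) = μ(φ⁻¹ e)`. -/
noncomputable def Vop {Ω : Type*} [MeasurableSpace Ω] (φ : Ω → Ω) :
    SignedMeasure Ω → SignedMeasure Ω :=
  fun μ => μ.map φ

/-- The Dirac measure at `ω`, as a signed measure. -/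
noncomputable def diracSM {Ω : Type*} [MeasurableSpace Ω] (ω : Ω) : SignedMeasure Ω :=
  (Measure.dirac ω).toSignedMeasure

/-- `Γ(Ω,φ)`: the closure of `{Vⁿ : n ≥ 0}` in the weak* operator topology. -/
def GammaSG {Ω : Type*} [TopologicalSpace Ω] [MeasurableSpace Ω] (φ : Ω → Ω) :
    Set (SignedMeasure Ω → SignedMeasure Ω) :=
  closure (Set.range fun n : ℕ => (Vop φ)^[n])

/-- `G(Ω,φ)`: the closure of the convex hull of `{Vⁿ : n ≥ 0}` in the weak* operator topology. -/
def GSG {Ω : Type*} [TopologicalSpace Ω] [MeasurableSpace Ω] (φ : Ω → Ω) :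
    Set (SignedMeasure Ω → SignedMeasure Ω) :=
  closure (convexHull ℝ (Set.range fun n : ℕ => (Vop φ)^[n]))

/-- The kernel `L = {Q ∈ G(Ω,φ) : V ∘ Q = Q}` of the semigroup `G(Ω,φ)`. -/
def Lker {Ω : Type*} [TopologicalSpace Ω] [MeasurableSpace Ω] (φ : Ω → Ω) :
    Set (SignedMeasure Ω → SignedMeasure Ω) :=
  {Q ∈ GSG φ | Vop φ ∘ Q = Q}

/-- The Ellis enveloping semigroup `E(Ω,φ)`: the closure of the iterates `{φⁿ : n ≥ 0}`
in the product topology (pointwise convergence) on `Ω → Ω`. -/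
def EllisE {Ω : Type*} [TopologicalSpace Ω] (φ : Ω → Ω) : Set (Ω → Ω) :=
  closure (Set.range fun n : ℕ => φ^[n])

/-- `E_b(Ω,φ)`: the smallest set of self-maps of `Ω` containing the iterates `{φⁿ : n ≥ 0}`
and sequentially closed under pointwise convergence. -/
inductive Eb {Ω : Type*} [TopologicalSpace Ω] (φ : Ω → Ω) : (Ω → Ω) → Prop
  | iterate (n : ℕ) : Eb φ φ^[n]
  | lim (p : ℕ → Ω → Ω) (q : Ω → Ω) (hp : ∀ k, Eb φ (p k))
      (hq : ∀ ω, Tendsto (fun k => p k ω) atTop (𝓝 (q ω))) : Eb φ q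

/-- `E₁(Ω,φ)`: the set of pointwise limits of sequences of iterates `φ^{n_k}`. -/
def E1SG {Ω : Type*} [TopologicalSpace Ω] (φ : Ω → Ω) : Set (Ω → Ω) :=
  {p | ∃ n : ℕ → ℕ, ∀ ω, Tendsto (fun k => φ^[n k] ω) atTop (𝓝 (p ω))}

/-- An operator `P ∈ Γ(Ω,φ)` with `p = πP` is regular if `p` is Borel measurable and
`(Pμ)(e) = μ(p⁻¹ e)` for every Borel probability measure `μ` and Borel set `e`. -/
def RegularOperator {Ω : Type*} [TopologicalSpace Ω] [MeasurableSpace Ω]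
    (P : SignedMeasure Ω → SignedMeasure Ω) (p : Ω → Ω) : Prop :=
  Measurable p ∧ ∀ (μ : Measure Ω) [IsProbabilityMeasure μ],
    ∀ e : Set Ω, MeasurableSet e → P μ.toSignedMeasure e = (μ (p ⁻¹' e)).toReal

/-- A minimal set of the semicascade `(Ω,φ)`: a nonempty closed `φ`-invariant set containing
no proper nonempty closed `φ`-invariant subset. -/
def IsMinimalSet {Ω : Type*} [TopologicalSpace Ω] (φ : Ω → Ω) (m : Set Ω) : Prop :=
  m.Nonempty ∧ IsClosed m ∧ Set.MapsTo φ m m ∧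
    ∀ m' ⊆ m, m'.Nonempty → IsClosed m' → Set.MapsTo φ m' m' → m' = m

/-- The orbit closure of a point `ω`: the closure of the trajectory `{φⁿ ω : n ≥ 0}`. -/
def orbitClosure {Ω : Type*} [TopologicalSpace Ω] (φ : Ω → Ω) (ω : Ω) : Set Ω :=
  closure (Set.range fun n : ℕ => φ^[n] ω)

/-- A `φ`-ergodic measure: a `φ`-invariant Borel probability measure `μ` such that
`μ(e) ∈ {0,1}` for every Borel set `e` with `φ⁻¹ e = e`. -/
def IsErgodicMeasure {Ω : Type*} [MeasurableSpace Ω] (φ : Ω → Ω) (μ : Measure Ω) : Prop :=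
  IsProbabilityMeasure μ ∧ (∀ e : Set Ω, MeasurableSet e → μ (φ ⁻¹' e) = μ e) ∧
    (∀ e : Set Ω, MeasurableSet e → φ ⁻¹' e = e → μ e = 0 ∨ μ e = 1)

/-- The support of a Borel measure: the smallest closed set of full measure
(the intersection of all closed sets of full measure). -/
def msupp {Ω : Type*} [TopologicalSpace Ω] [MeasurableSpace Ω] (μ : Measure Ω) : Set Ω :=
  ⋂₀ {s : Set Ω | IsClosed s ∧ μ sᶜ = 0}

/-- The semicascade `(Ω,φ)` is tame: for every continuous `x` and every strictly increasing
sequence `n(1) < n(2) < ⋯`, the infimum over finitely supported real coefficients `a` with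
`Σ|aₖ| = 1` of the sup-norms `‖Σₖ aₖ · (x ∘ φ^{n(k)})‖` is `0`. -/
def Tame {Ω : Type*} [TopologicalSpace Ω] [CompactSpace Ω] (φ : Ω → Ω)
    (hφ : Continuous φ) : Prop :=
  ∀ (x : C(Ω, ℝ)) (n : ℕ → ℕ), StrictMono n →
    sInf {r : ℝ | ∃ a : ℕ →₀ ℝ, (∑ k ∈ a.support, |a k|) = 1 ∧
      r = ‖∑ k ∈ a.support, a k • x.comp ⟨φ^[n k], hφ.iterate (n k)⟩‖} = 0

/-- Points `a, b` are proximal: `inf_{n ≥ 0} d(φⁿ a, φⁿ b) = 0`. -/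
def Proximal {Ω : Type*} [PseudoMetricSpace Ω] (φ : Ω → Ω) (a b : Ω) : Prop :=
  (⨅ n : ℕ, dist (φ^[n] a) (φ^[n] b)) = 0

variable {Ω : Type*} [TopologicalSpace Ω] [CompactSpace Ω] [TopologicalSpace.MetrizableSpace Ω]
  [Nonempty Ω] [MeasurableSpace Ω] [BorelSpace Ω]

open scoped ENNReal NNReal

section SpairLemmas

variable {α : Type*} [MeasurableSpace α]

/-- Integrability with respect to every finite measure. -/
def IntAll (f : α → ℝ) : Prop := ∀ (ν : Measure α) [IsFiniteMeasure ν], Integrable f ν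

theorem sm_apply (σ : SignedMeasure α) {e : Set α} (he : MeasurableSet e) :
    σ e = (σ.toJordanDecomposition.posPart e).toReal
      - (σ.toJordanDecomposition.negPart e).toReal := by
  conv_lhs => rw [← σ.toSignedMeasure_toJordanDecomposition]
  rw [JordanDecomposition.toSignedMeasure, VectorMeasure.sub_apply,
    Measure.toSignedMeasure_apply_measurable he, Measure.toSignedMeasure_apply_measurable he]
  rfl

theorem spair_eq_of_eq_sub {f : α → ℝ} (hf : IntAll f) (a b : Measure α) [IsFiniteMeasure a]
    [IsFiniteMeasure b] {σ : SignedMeasure α}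
    (hσ : σ = a.toSignedMeasure - b.toSignedMeasure) :
    spair f σ = (∫ ω, f ω ∂a) - ∫ ω, f ω ∂b := by
  set P := σ.toJordanDecomposition.posPart with hP
  set N := σ.toJordanDecomposition.negPart with hN
  have hJ : P.toSignedMeasure - N.toSignedMeasure = σ := by
    conv_rhs => rw [← σ.toSignedMeasure_toJordanDecomposition]
    rfl
  have h2 : (P + b).toSignedMeasure = (N + a).toSignedMeasure := by
    rw [Measure.toSignedMeasure_add, Measure.toSignedMeasure_add]
    have : P.toSignedMeasure - N.toSignedMeasure = a.toSignedMeasure - b.toSignedMeasure := by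
      rw [hJ, hσ]
    rw [sub_eq_sub_iff_add_eq_add] at this
    linear_combination (norm := abel) this
  have h3 : P + b = N + a := Measure.toSignedMeasure_eq_toSignedMeasure_iff.mp h2
  have h4 : (∫ ω, f ω ∂P) + ∫ ω, f ω ∂b = (∫ ω, f ω ∂N) + ∫ ω, f ω ∂a := by
    rw [← integral_add_measure (hf P) (hf b), ← integral_add_measure (hf N) (hf a), h3]
  have : spair f σ = (∫ ω, f ω ∂P) - ∫ ω, f ω ∂N := rfl
  rw [this]; linarith

theorem spair_toSM {f : α → ℝ} (hf : IntAll f) (a : Measure α) [IsFiniteMeasure a] :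
    spair f a.toSignedMeasure = ∫ ω, f ω ∂a := by
  have h0 : (0 : Measure α).toSignedMeasure = 0 := by
    ext e he
    rw [Measure.toSignedMeasure_apply_measurable he]
    simp
  have := spair_eq_of_eq_sub hf a 0 (σ := a.toSignedMeasure) (by rw [h0, sub_zero])
  simpa using this

theorem spair_zero {f : α → ℝ} (hf : IntAll f) : spair f (0 : SignedMeasure α) = 0 := by
  have h0 : (0 : Measure α).toSignedMeasure = 0 := by
    ext e he
    rw [Measure.toSignedMeasure_apply_measurable he]
    simp
  have := spair_eq_of_eq_sub hf 0 0 (σ := 0) (by rw [h0, sub_zero])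
  simpa using this

theorem spair_jd (f : α → ℝ) (σ : SignedMeasure α) :
    σ = σ.toJordanDecomposition.posPart.toSignedMeasure
      - σ.toJordanDecomposition.negPart.toSignedMeasure := by
  conv_lhs => rw [← σ.toSignedMeasure_toJordanDecomposition]
  rfl

theorem spair_add {f : α → ℝ} (hf : IntAll f) (σ τ : SignedMeasure α) :
    spair f (σ + τ) = spair f σ + spair f τ := by
  have key : σ + τ = (σ.toJordanDecomposition.posPart + τ.toJordanDecomposition.posPart).toSignedMeasure
      - (σ.toJordanDecomposition.negPart + τ.toJordanDecomposition.negPart).toSignedMeasure := by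
    rw [Measure.toSignedMeasure_add, Measure.toSignedMeasure_add]
    conv_lhs => rw [spair_jd f σ, spair_jd f τ]
    abel
  rw [spair_eq_of_eq_sub hf _ _ key, integral_add_measure (hf _) (hf _),
    integral_add_measure (hf _) (hf _)]
  have h1 : spair f σ = (∫ ω, f ω ∂σ.toJordanDecomposition.posPart)
      - ∫ ω, f ω ∂σ.toJordanDecomposition.negPart := rfl
  have h2 : spair f τ = (∫ ω, f ω ∂τ.toJordanDecomposition.posPart)
      - ∫ ω, f ω ∂τ.toJordanDecomposition.negPart := rfl
  rw [h1, h2]; ring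

end SpairLemmas

section SpairLemmas2

variable {α : Type*} [MeasurableSpace α]

theorem isFiniteMeasure_ennreal_smul {c : ℝ≥0∞} (hc : c ≠ ⊤) (ν : Measure α)
    [IsFiniteMeasure ν] : IsFiniteMeasure (c • ν) :=
  ⟨by rw [Measure.smul_apply, smul_eq_mul]
      exact ENNReal.mul_lt_top hc.lt_top (measure_lt_top _ _)⟩

theorem isFiniteMeasure_map' {p : α → α} (hp : Measurable p) (ν : Measure α)
    [IsFiniteMeasure ν] : IsFiniteMeasure (ν.map p) :=
  ⟨by rw [Measure.map_apply hp MeasurableSet.univ]; simpa using measure_lt_top ν _⟩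

theorem spair_smul {f : α → ℝ} (hf : IntAll f) {c : ℝ} (hc : 0 ≤ c) (σ : SignedMeasure α) :
    spair f (c • σ) = c * spair f σ := by
  haveI := isFiniteMeasure_ennreal_smul (c := ENNReal.ofReal c) ENNReal.ofReal_ne_top
    σ.toJordanDecomposition.posPart
  haveI := isFiniteMeasure_ennreal_smul (c := ENNReal.ofReal c) ENNReal.ofReal_ne_top
    σ.toJordanDecomposition.negPart
  have key : c • σ = ((ENNReal.ofReal c) • σ.toJordanDecomposition.posPart).toSignedMeasure
      - ((ENNReal.ofReal c) • σ.toJordanDecomposition.negPart).toSignedMeasure := by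
    ext e he
    rw [VectorMeasure.sub_apply, VectorMeasure.smul_apply,
      Measure.toSignedMeasure_apply_measurable he, Measure.toSignedMeasure_apply_measurable he,
      measureReal_def, measureReal_def, Measure.smul_apply, Measure.smul_apply, sm_apply σ he]
    rw [smul_eq_mul, smul_eq_mul (α := ℝ≥0∞), smul_eq_mul (α := ℝ≥0∞), ENNReal.toReal_mul,
      ENNReal.toReal_mul, ENNReal.toReal_ofReal hc]
    ring
  rw [spair_eq_of_eq_sub hf _ _ key, integral_smul_measure, integral_smul_measure,
    ENNReal.toReal_ofReal hc]
  have h1 : spair f σ = (∫ ω, f ω ∂σ.toJordanDecomposition.posPart)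
      - ∫ ω, f ω ∂σ.toJordanDecomposition.negPart := rfl
  rw [h1]; simp only [smul_eq_mul]; ring

theorem spair_map {f : α → ℝ} (hf : IntAll f) {p : α → α} (hp : Measurable p)
    (σ : SignedMeasure α) :
    spair f (σ.map p) = spair (f ∘ p) σ := by
  haveI := isFiniteMeasure_map' hp σ.toJordanDecomposition.posPart
  haveI := isFiniteMeasure_map' hp σ.toJordanDecomposition.negPart
  have key : σ.map p = (σ.toJordanDecomposition.posPart.map p).toSignedMeasure
      - (σ.toJordanDecomposition.negPart.map p).toSignedMeasure := by
    ext e he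
    rw [VectorMeasure.map_apply _ hp he, VectorMeasure.sub_apply,
      Measure.toSignedMeasure_apply_measurable he, Measure.toSignedMeasure_apply_measurable he,
      measureReal_def, measureReal_def, Measure.map_apply hp he, Measure.map_apply hp he, sm_apply σ (hp he)]
  rw [spair_eq_of_eq_sub hf _ _ key,
    integral_map hp.aemeasurable (hf _).1, integral_map hp.aemeasurable (hf _).1]
  rfl

theorem spair_dirac {f : α → ℝ} (hf : IntAll f) (hsm : StronglyMeasurable f) (ω : α) :
    spair f (diracSM ω) = f ω := by
  rw [diracSM, spair_toSM hf, integral_dirac' f ω hsm]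

theorem vop_iterate {φ : α → α} (hφ : Measurable φ) (n : ℕ) (σ : SignedMeasure α) :
    (Vop φ)^[n] σ = σ.map (φ^[n]) := by
  induction n with
  | zero => simp [VectorMeasure.map_id]
  | succ n ih =>
    rw [Function.iterate_succ_apply', ih]
    show (σ.map (φ^[n])).map φ = _
    ext e he
    rw [VectorMeasure.map_apply _ hφ he, VectorMeasure.map_apply _ (hφ.iterate n) (hφ he),
      VectorMeasure.map_apply _ (hφ.iterate (n+1)) he, Function.iterate_succ']
    simp [Set.preimage_comp]

theorem spair_comb {f : α → ℝ} (hf : IntAll f) {φ : α → α} (hφ : Measurable φ)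
    {ι : Type*} (t : Finset ι) (w : ι → ℝ) (hw : ∀ i ∈ t, 0 ≤ w i) (n : ι → ℕ)
    (σ : SignedMeasure α) :
    spair f (∑ i ∈ t, w i • σ.map (φ^[n i])) = ∑ i ∈ t, w i * spair (f ∘ φ^[n i]) σ := by
  classical
  induction t using Finset.induction_on with
  | empty => simpa using spair_zero hf
  | insert _ _ hji ih =>
    rename_i j u
    rw [Finset.sum_insert hji, Finset.sum_insert hji, spair_add hf,
      spair_smul hf (hw j (Finset.mem_insert_self j u)),
      spair_map hf (hφ.iterate (n j)),
      ih (fun i hi => hw i (Finset.mem_insert_of_mem hi))]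

end SpairLemmas2

section Helpers

theorem intAll_of_continuous {Ω : Type*} [TopologicalSpace Ω] [CompactSpace Ω]
    [MeasurableSpace Ω] [OpensMeasurableSpace Ω] {f : Ω → ℝ} (hf : Continuous f) :
    IntAll f := by
  intro ν _
  have := (BoundedContinuousFunction.mkOfCompact (⟨f, hf⟩ : C(Ω, ℝ))).integrable ν
  exact this

theorem exists_countable_sep {X : Type*} [TopologicalSpace X] [SecondCountableTopology X]
    {J : Type*} (a : J → X → ℝ) (ha : ∀ j, Continuous (a j)) :
    ∃ T : Set J, T.Countable ∧ ∀ u v : X, (∀ j ∈ T, a j u = a j v) → ∀ j, a j u = a j v := by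
  obtain ⟨T, hTc, hT⟩ := TopologicalSpace.isOpen_iUnion_countable
    (fun j => {q : X × X | a j q.1 ≠ a j q.2})
    (fun j => isOpen_ne_fun ((ha j).comp continuous_fst) ((ha j).comp continuous_snd))
  refine ⟨T, hTc, fun u v huv j => ?_⟩
  by_contra hne
  have hmem : (u, v) ∈ ⋃ i, {q : X × X | a i q.1 ≠ a i q.2} := Set.mem_iUnion.mpr ⟨j, hne⟩
  rw [← hT] at hmem
  obtain ⟨i, hiT, hi⟩ := Set.mem_iUnion₂.mp hmem
  exact hi (huv i hiT)

end Helpers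

/-- Proposition 3.3: for an ordinary semicascade, an ergodic net of operators from the convex
hull of `{Vⁿ : n ≥ 0}` converges in the weak* operator topology as soon as the pairings
against Dirac measures converge. -/
theorem stmt_13 (φ : Ω → Ω) (hφ : Continuous φ)
    (hmet : TopologicalSpace.MetrizableSpace (EllisE φ))
    {I : Type*} [Nonempty I] [Preorder I] [IsDirected I (· ≤ ·)]
    (T : I → SignedMeasure Ω → SignedMeasure Ω)
    (hmem : ∀ i, T i ∈ convexHull ℝ (Set.range fun n : ℕ => (Vop φ)^[n]))
    (herg : ∀ (x : C(Ω, ℝ)) (μ : SignedMeasure Ω),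
      Tendsto (fun i => spair (⇑x) (T i μ) - spair (⇑x) (T i (Vop φ μ))) atTop (𝓝 0))
    (hdirac : ∀ (x : C(Ω, ℝ)) (ω : Ω), ∃ c : ℝ,
      Tendsto (fun i => spair (⇑x) (T i (diracSM ω))) atTop (𝓝 c)) :
    ∀ (x : C(Ω, ℝ)) (μ : SignedMeasure Ω), ∃ c : ℝ,
      Tendsto (fun i => spair (⇑x) (T i μ)) atTop (𝓝 c) := by
  classical
  intro x μ
  -- basic instances on the Ellis semigroup
  haveI : CompactSpace (EllisE φ) :=
    isCompact_iff_compactSpace.mp (IsClosed.isCompact isClosed_closure)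
  haveI := hmet
  letI : MetricSpace (EllisE φ) := TopologicalSpace.metrizableSpaceMetric _
  -- evaluation functions
  let e : Ω → C(EllisE φ, ℝ) := fun ω =>
    ⟨fun p => x (p.1 ω), x.continuous.comp ((continuous_apply ω).comp continuous_subtype_val)⟩
  -- the compact space of normalized functionals
  let Sset : Set (C(EllisE φ, ℝ) → ℝ) :=
    {F | (∀ f g, F (f + g) = F f + F g) ∧ (∀ (c : ℝ) (f), F (c • f) = c * F f) ∧
      ∀ f, |F f| ≤ ‖f‖}
  have hScomp : IsCompact Sset := by
    have hsub : Sset ⊆ Set.pi Set.univ (fun f : C(EllisE φ, ℝ) => Set.Icc (-‖f‖) ‖f‖) :=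
      fun F hF f _ => abs_le.mp (hF.2.2 f)
    refine IsCompact.of_isClosed_subset (isCompact_univ_pi fun f => isCompact_Icc) ?_ hsub
    have h1 : IsClosed {F : C(EllisE φ, ℝ) → ℝ | ∀ f g, F (f + g) = F f + F g} := by
      rw [Set.setOf_forall]
      refine isClosed_iInter fun f => ?_
      rw [Set.setOf_forall]
      exact isClosed_iInter fun g =>
        isClosed_eq (continuous_apply (f + g)) ((continuous_apply f).add (continuous_apply g))
    have h2 : IsClosed {F : C(EllisE φ, ℝ) → ℝ | ∀ (c : ℝ) (f), F (c • f) = c * F f} := by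
      rw [Set.setOf_forall]
      refine isClosed_iInter fun c => ?_
      rw [Set.setOf_forall]
      exact isClosed_iInter fun f =>
        isClosed_eq (continuous_apply (c • f)) (continuous_const.mul (continuous_apply f))
    have h3 : IsClosed {F : C(EllisE φ, ℝ) → ℝ | ∀ f, |F f| ≤ ‖f‖} := by
      rw [Set.setOf_forall]
      exact isClosed_iInter fun f =>
        isClosed_le ((continuous_apply f).abs) continuous_const
    exact h1.inter (h2.inter h3)
  haveI : CompactSpace ↥Sset := isCompact_iff_compactSpace.mp hScomp
  -- second countability of Sset
  obtain ⟨D, hDc, hDd⟩ := TopologicalSpace.exists_countable_dense C(EllisE φ, ℝ)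
  haveI := hDc.to_subtype
  have hlip : ∀ u : ↥Sset, Continuous u.1 := by
    intro u
    obtain ⟨hadd, hsmul, hbd⟩ := u.2
    have hsub : ∀ f g, u.1 (f - g) = u.1 f - u.1 g := by
      intro f g
      have hneg : u.1 (-g) = -u.1 g := by
        have := hsmul (-1 : ℝ) g
        simpa using this
      rw [sub_eq_add_neg, hadd, hneg, sub_eq_add_neg]
    have : LipschitzWith 1 u.1 := by
      refine LipschitzWith.of_dist_le_mul fun f g => ?_
      rw [Real.dist_eq, ← hsub, dist_eq_norm]
      simpa using hbd (f - g)
    exact this.continuous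
  have hρinj : Function.Injective (fun (u : ↥Sset) (d : ↥D) => u.1 d.1) := by
    intro u v huv
    have : Set.EqOn u.1 v.1 D := fun f hf => congrFun huv ⟨f, hf⟩
    exact Subtype.ext ((hlip u).ext_on hDd (hlip v) this)
  have hρcont : Continuous (fun (u : ↥Sset) (d : ↥D) => u.1 d.1) :=
    continuous_pi fun d => (continuous_apply d.1).comp continuous_subtype_val
  haveI : SecondCountableTopology ↥Sset :=
    (hρcont.isClosedEmbedding hρinj).toIsEmbedding.secondCountableTopology
  -- countable separating set
  obtain ⟨Tsep, hTsepc, hTsep⟩ := exists_countable_sep (X := ↥Sset) (J := Ω)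
    (fun ω u => u.1 (e ω)) (fun ω => (continuous_apply (e ω)).comp continuous_subtype_val)
  -- integrability facts
  have hx_int : IntAll (⇑x) := intAll_of_continuous x.continuous
  have hBxnn : (0:ℝ) ≤ ‖x‖ := norm_nonneg x
  have heB : ∀ ω, ‖e ω‖ ≤ ‖x‖ := by
    intro ω
    refine (ContinuousMap.norm_le _ hBxnn).mpr fun p => ?_
    exact x.norm_coe_le_norm (p.1 ω)
  -- the main claim: representation of each T i by a functional in Sset
  have claim : ∀ i, ∃ F : C(EllisE φ, ℝ) → ℝ, F ∈ Sset ∧ Continuous (fun ω => F (e ω)) ∧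
      (∀ ω, F (e ω) = spair (⇑x) (T i (diracSM ω))) ∧
      (spair (⇑x) (T i μ) = (∫ ω, F (e ω) ∂μ.toJordanDecomposition.posPart)
        - ∫ ω, F (e ω) ∂μ.toJordanDecomposition.negPart) := by
    intro i
    have hi := hmem i
    rw [convexHull_eq] at hi
    obtain ⟨ι', t, w, z, hw0, hw1, hz, hcm⟩ := hi
    let nn : ι' → ℕ := fun j => if h : ∃ n : ℕ, (Vop φ)^[n] = z j then h.choose else 0
    have hzn : ∀ j ∈ t, (Vop φ)^[nn j] = z j := by
      intro j hj
      obtain ⟨n, hn⟩ := hz j hj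
      have hex : ∃ n : ℕ, (Vop φ)^[n] = z j := ⟨n, hn⟩
      simp only [nn, dif_pos hex]
      exact hex.choose_spec
    have hsp : ∀ ν : SignedMeasure Ω, spair (⇑x) (T i ν)
        = ∑ j ∈ t, w j * spair (⇑x ∘ φ^[nn j]) ν := by
      intro ν
      have h1 : T i = ∑ j ∈ t, w j • z j := by
        rw [← hcm, Finset.centerMass_eq_of_sum_1 _ _ hw1]
      have h2 : T i ν = ∑ j ∈ t, w j • (ν.map (φ^[nn j])) := by
        rw [h1, Finset.sum_apply]
        refine Finset.sum_congr rfl fun j hj => ?_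
        rw [Pi.smul_apply, ← hzn j hj, vop_iterate hφ.measurable]
      rw [h2]
      exact spair_comb hx_int hφ.measurable t w hw0 nn ν
    have hcont : ∀ j : ι', Continuous fun ω => x (φ^[nn j] ω) :=
      fun j => x.continuous.comp (hφ.iterate (nn j))
    refine ⟨fun f => ∑ j ∈ t, w j * f ⟨φ^[nn j], subset_closure ⟨nn j, rfl⟩⟩,
      ⟨?_, ?_, ?_⟩, ?_, ?_, ?_⟩
    · intro f g
      simp only [ContinuousMap.add_apply, mul_add, Finset.sum_add_distrib]
    · intro c f
      simp only [ContinuousMap.smul_apply, smul_eq_mul, Finset.mul_sum]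
      exact Finset.sum_congr rfl fun j _ => by ring
    · intro f
      calc |∑ j ∈ t, w j * f ⟨φ^[nn j], subset_closure ⟨nn j, rfl⟩⟩|
          ≤ ∑ j ∈ t, |w j * f ⟨φ^[nn j], subset_closure ⟨nn j, rfl⟩⟩| :=
            Finset.abs_sum_le_sum_abs _ _
        _ ≤ ∑ j ∈ t, w j * ‖f‖ := by
            refine Finset.sum_le_sum fun j hj => ?_
            rw [abs_mul, abs_of_nonneg (hw0 j hj)]
            refine mul_le_mul_of_nonneg_left ?_ (hw0 j hj)
            have := f.norm_coe_le_norm ⟨φ^[nn j], subset_closure ⟨nn j, rfl⟩⟩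
            rwa [Real.norm_eq_abs] at this
        _ = ‖f‖ := by rw [← Finset.sum_mul, hw1, one_mul]
    · show Continuous fun ω => ∑ j ∈ t, w j * x (φ^[nn j] ω)
      exact continuous_finset_sum _ fun j _ => continuous_const.mul (hcont j)
    · intro ω
      rw [hsp (diracSM ω)]
      refine Finset.sum_congr rfl fun j hj => ?_
      rw [spair_dirac (f := ⇑x ∘ φ^[nn j]) (intAll_of_continuous (hcont j))
        (hcont j).stronglyMeasurable ω]
      rfl
    · rw [hsp μ]
      have hP : (∫ ω, (∑ j ∈ t, w j * x (φ^[nn j] ω)) ∂μ.toJordanDecomposition.posPart)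
          = ∑ j ∈ t, w j * ∫ ω, x (φ^[nn j] ω) ∂μ.toJordanDecomposition.posPart := by
        rw [integral_finset_sum t (fun j _ =>
          ((intAll_of_continuous (hcont j)) _).const_mul (w j))]
        exact Finset.sum_congr rfl fun j _ => integral_const_mul _ _
      have hN : (∫ ω, (∑ j ∈ t, w j * x (φ^[nn j] ω)) ∂μ.toJordanDecomposition.negPart)
          = ∑ j ∈ t, w j * ∫ ω, x (φ^[nn j] ω) ∂μ.toJordanDecomposition.negPart := by
        rw [integral_finset_sum t (fun j _ =>
          ((intAll_of_continuous (hcont j)) _).const_mul (w j))]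
        exact Finset.sum_congr rfl fun j _ => integral_const_mul _ _
      have hsplit : ∑ j ∈ t, w j * spair (⇑x ∘ φ^[nn j]) μ
          = (∑ j ∈ t, w j * ∫ ω, x (φ^[nn j] ω) ∂μ.toJordanDecomposition.posPart)
            - ∑ j ∈ t, w j * ∫ ω, x (φ^[nn j] ω) ∂μ.toJordanDecomposition.negPart := by
        rw [← Finset.sum_sub_distrib]
        refine Finset.sum_congr rfl fun j _ => ?_
        have hdef : spair (⇑x ∘ φ^[nn j]) μ
            = (∫ ω, x (φ^[nn j] ω) ∂μ.toJordanDecomposition.posPart)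
              - ∫ ω, x (φ^[nn j] ω) ∂μ.toJordanDecomposition.negPart := rfl
        rw [hdef]; ring
      rw [hsplit, ← hP, ← hN]
      rfl
  choose F hFS hFcont hFdirac hFμ using claim
  have hFb : ∀ i ω, |F i (e ω)| ≤ ‖x‖ := fun i ω => le_trans ((hFS i).2.2 (e ω)) (heB ω)
  -- the bounded net s
  set s : I → ℝ := fun i => spair (⇑x) (T i μ) with hs_def
  have hsbound : ∀ i, |s i| ≤ ‖x‖ * (μ.toJordanDecomposition.posPart Set.univ).toReal
      + ‖x‖ * (μ.toJordanDecomposition.negPart Set.univ).toReal := by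
    intro i
    rw [hs_def]
    simp only
    rw [hFμ i]
    have b1 : |∫ ω, F i (e ω) ∂μ.toJordanDecomposition.posPart|
        ≤ ‖x‖ * (μ.toJordanDecomposition.posPart Set.univ).toReal := by
      have := norm_integral_le_of_norm_le_const (μ := μ.toJordanDecomposition.posPart)
        (C := ‖x‖) (f := fun ω => F i (e ω))
        (Eventually.of_forall fun ω => by simpa [Real.norm_eq_abs] using hFb i ω)
      simpa [Real.norm_eq_abs, measureReal_def] using this
    have b2 : |∫ ω, F i (e ω) ∂μ.toJordanDecomposition.negPart|
        ≤ ‖x‖ * (μ.toJordanDecomposition.negPart Set.univ).toReal := by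
      have := norm_integral_le_of_norm_le_const (μ := μ.toJordanDecomposition.negPart)
        (C := ‖x‖) (f := fun ω => F i (e ω))
        (Eventually.of_forall fun ω => by simpa [Real.norm_eq_abs] using hFb i ω)
      simpa [Real.norm_eq_abs, measureReal_def] using this
    calc |(∫ ω, F i (e ω) ∂μ.toJordanDecomposition.posPart)
        - ∫ ω, F i (e ω) ∂μ.toJordanDecomposition.negPart| ≤ _ + _ := abs_sub _ _
    _ ≤ _ := add_le_add b1 b2
  set R : ℝ := ‖x‖ * (μ.toJordanDecomposition.posPart Set.univ).toReal
      + ‖x‖ * (μ.toJordanDecomposition.negPart Set.univ).toReal with hR_def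
  have hble : IsBoundedUnder (· ≤ ·) (atTop : Filter I) s :=
    ⟨R, Filter.eventually_map.mpr (Eventually.of_forall fun i => (abs_le.mp (hsbound i)).2)⟩
  have hbge : IsBoundedUnder (· ≥ ·) (atTop : Filter I) s :=
    ⟨-R, Filter.eventually_map.mpr (Eventually.of_forall fun i => (abs_le.mp (hsbound i)).1)⟩
  set L : ℝ := limsup s atTop with hL_def
  set l : ℝ := liminf s atTop with hl_def
  -- frequently near L, l
  have hfreqL : ∀ ε : ℝ, 0 < ε → ∃ᶠ i in (atTop : Filter I), |s i - L| < ε := by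
    intro ε hε
    have h1 : ∃ᶠ i in (atTop : Filter I), L - ε < s i :=
      frequently_lt_of_lt_limsup hbge.isCoboundedUnder_flip (by linarith)
    have h2 : ∀ᶠ i in (atTop : Filter I), s i < L + ε :=
      eventually_lt_of_limsup_lt (by linarith) hble
    exact (h1.and_eventually h2).mono fun i hi => abs_sub_lt_iff.mpr ⟨by linarith [hi.1, hi.2], by linarith [hi.1, hi.2]⟩
  have hfreql : ∀ ε : ℝ, 0 < ε → ∃ᶠ i in (atTop : Filter I), |s i - l| < ε := by
    intro ε hε
    have h1 : ∃ᶠ i in (atTop : Filter I), s i < l + ε :=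
      frequently_lt_of_liminf_lt hble.isCoboundedUnder_flip (by linarith)
    have h2 : ∀ᶠ i in (atTop : Filter I), l - ε < s i :=
      eventually_lt_of_lt_liminf (by linarith) hbge
    exact (h1.and_eventually h2).mono fun i hi => abs_sub_lt_iff.mpr ⟨by linarith [hi.1, hi.2], by linarith [hi.1, hi.2]⟩
  -- limits against Dirac measures
  choose g hg using hdirac x
  -- enumerate the separating set
  obtain ⟨d, hd⟩ : ∃ d : ℕ → Ω, Tsep ⊆ Set.range d := by
    rcases Set.eq_empty_or_nonempty Tsep with h | h
    · exact ⟨fun _ => Classical.arbitrary Ω, by simp [h]⟩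
    · obtain ⟨f, hf⟩ := Set.Countable.exists_eq_range hTsepc h
      exact ⟨f, hf ▸ subset_rfl⟩
  -- construct the index sequence
  have hstep : ∀ k : ℕ, ∃ i : I, |s i - (if Even k then L else l)| < 1 / (k + 1) ∧
      ∀ j ≤ k, |spair (⇑x) (T i (diracSM (d j))) - g (d j)| < 1 / (k + 1) := by
    intro k
    have hpos : (0:ℝ) < 1 / (k + 1) := by positivity
    have hev : ∀ᶠ i in (atTop : Filter I),
        ∀ j ≤ k, |spair (⇑x) (T i (diracSM (d j))) - g (d j)| < 1 / (k + 1) := by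
      have : ∀ j, ∀ᶠ i in (atTop : Filter I),
          |spair (⇑x) (T i (diracSM (d j))) - g (d j)| < 1 / (k + 1) := by
        intro j
        have := Metric.tendsto_nhds.mp (hg (d j)) _ hpos
        exact this.mono fun i hi => by rwa [Real.dist_eq] at hi
      have hall := (Filter.eventually_all_finite (Set.finite_Iic k)).mpr
        (fun j (_ : j ∈ Set.Iic k) => this j)
      exact hall.mono fun i hi j hj => hi j hj
    have hfr : ∃ᶠ i in (atTop : Filter I), |s i - (if Even k then L else l)| < 1 / (k + 1) := by
      by_cases hk : Even k
      · simpa [hk] using hfreqL _ hpos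
      · simpa [hk] using hfreql _ hpos
    exact (hfr.and_eventually hev).exists
  choose m hm1 hm2 using hstep
  -- convergence of F at separating points
  have hdsep : ∀ j : ℕ, Tendsto (fun k => F (m k) (e (d j))) atTop (𝓝 (g (d j))) := by
    intro j
    rw [Metric.tendsto_atTop]
    intro ε hε
    obtain ⟨k₀, hk₀⟩ := exists_nat_gt (1 / ε)
    refine ⟨max j k₀, fun k hk => ?_⟩
    have hjk : j ≤ k := le_trans (le_max_left _ _) hk
    have hlt := hm2 k j hjk
    rw [Real.dist_eq, hFdirac]
    refine lt_of_lt_of_le hlt ?_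
    have hkk : (1:ℝ) / ε < (k:ℝ) + 1 := by
      have : (k₀ : ℝ) ≤ (k : ℝ) + 1 := by
        exact_mod_cast Nat.le_succ_of_le (le_trans (le_max_right j k₀) hk)
      linarith
    have hk1 : (0:ℝ) < (k:ℝ) + 1 := by positivity
    rw [div_lt_iff₀ hε] at hkk
    rw [div_le_iff₀ hk1]
    nlinarith
  -- sequential compactness: even and odd subsequences
  haveI hT3S : T3Space ↥Sset := inferInstance
  haveI : TopologicalSpace.MetrizableSpace ↥Sset :=
    TopologicalSpace.metrizableSpace_of_t3_secondCountable ↥Sset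
  letI : MetricSpace ↥Sset := TopologicalSpace.metrizableSpaceMetric ↥Sset
  haveI : SeqCompactSpace ↥Sset := FirstCountableTopology.seq_compact_of_compact
  obtain ⟨Λe, ψe, hψe, hΛe⟩ := SeqCompactSpace.tendsto_subseq
    (fun k => (⟨F (m (2 * k)), hFS (m (2 * k))⟩ : ↥Sset))
  obtain ⟨Λo, ψo, hψo, hΛo⟩ := SeqCompactSpace.tendsto_subseq
    (fun k => (⟨F (m (2 * k + 1)), hFS (m (2 * k + 1))⟩ : ↥Sset))
  have hcoordE : ∀ f, Tendsto (fun r => F (m (2 * ψe r)) f) atTop (𝓝 (Λe.1 f)) := by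
    intro f
    exact (((continuous_apply f).comp continuous_subtype_val).tendsto Λe).comp hΛe
  have hcoordO : ∀ f, Tendsto (fun r => F (m (2 * ψo r + 1)) f) atTop (𝓝 (Λo.1 f)) := by
    intro f
    exact (((continuous_apply f).comp continuous_subtype_val).tendsto Λo).comp hΛo
  -- identification on the separating set
  have hsepeq : ∀ ω, Λe.1 (e ω) = Λo.1 (e ω) := by
    have key : ∀ ω ∈ Tsep, Λe.1 (e ω) = Λo.1 (e ω) := by
      intro ω hω
      obtain ⟨j, rfl⟩ := hd hω
      have hae : Tendsto (fun r => 2 * ψe r) atTop atTop :=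
        tendsto_atTop_mono (fun r => by omega) hψe.tendsto_atTop
      have hao : Tendsto (fun r => 2 * ψo r + 1) atTop atTop :=
        tendsto_atTop_mono (fun r => by omega) hψo.tendsto_atTop
      have h1 : Tendsto (fun r => F (m (2 * ψe r)) (e (d j))) atTop (𝓝 (g (d j))) :=
        (hdsep j).comp hae
      have h2 : Tendsto (fun r => F (m (2 * ψo r + 1)) (e (d j))) atTop (𝓝 (g (d j))) :=
        (hdsep j).comp hao
      have e1 : Λe.1 (e (d j)) = g (d j) := tendsto_nhds_unique (hcoordE (e (d j))) h1
      have e2 : Λo.1 (e (d j)) = g (d j) := tendsto_nhds_unique (hcoordO (e (d j))) h2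
      rw [e1, e2]
    exact hTsep Λe Λo key
  -- dominated convergence on both subsequences
  have hDCT : ∀ (Λ : ↥Sset) (q : ℕ → ℕ),
      (∀ f, Tendsto (fun r => F (m (q r)) f) atTop (𝓝 (Λ.1 f))) →
      Tendsto (fun r => s (m (q r))) atTop
        (𝓝 ((∫ ω, Λ.1 (e ω) ∂μ.toJordanDecomposition.posPart)
          - ∫ ω, Λ.1 (e ω) ∂μ.toJordanDecomposition.negPart)) := by
    intro Λ q hq
    have hconv : ∀ (ν : Measure Ω), IsFiniteMeasure ν →
        Tendsto (fun r => ∫ ω, F (m (q r)) (e ω) ∂ν) atTop (𝓝 (∫ ω, Λ.1 (e ω) ∂ν)) := by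
      intro ν hν
      refine tendsto_integral_of_dominated_convergence (fun _ => ‖x‖)
        (fun r => ((hFcont (m (q r)))).aestronglyMeasurable) (integrable_const _)
        (fun r => Eventually.of_forall fun ω => by
          simpa [Real.norm_eq_abs] using hFb (m (q r)) ω)
        (Eventually.of_forall fun ω => hq (e ω))
    have h1 := hconv μ.toJordanDecomposition.posPart inferInstance
    have h2 := hconv μ.toJordanDecomposition.negPart inferInstance
    have : (fun r => s (m (q r))) = fun r =>
        (∫ ω, F (m (q r)) (e ω) ∂μ.toJordanDecomposition.posPart)
          - ∫ ω, F (m (q r)) (e ω) ∂μ.toJordanDecomposition.negPart := by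
      funext r; rw [hs_def]; exact hFμ (m (q r))
    rw [this]
    exact h1.sub h2
  -- limits of the even/odd subsequences of s
  have hnk : Tendsto (fun k : ℕ => 1 / ((k:ℝ) + 1)) atTop (𝓝 0) :=
    tendsto_one_div_add_atTop_nhds_zero_nat
  have hsE : Tendsto (fun k => s (m (2 * k))) atTop (𝓝 L) := by
    have hb : ∀ k : ℕ, ‖s (m (2 * k)) - L‖ ≤ 1 / ((k:ℝ) + 1) := by
      intro k
      have := hm1 (2 * k)
      rw [if_pos (even_two_mul k)] at this
      rw [Real.norm_eq_abs]
      refine this.le.trans ?_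
      have h1 : ((k:ℝ) + 1) ≤ ((2 * k : ℕ) : ℝ) + 1 := by push_cast; linarith
      exact one_div_le_one_div_of_le (by positivity) h1
    have h0 : Tendsto (fun k => s (m (2 * k)) - L) atTop (𝓝 0) :=
      squeeze_zero_norm hb hnk
    have := h0.add_const L
    simpa using this
  have hsO : Tendsto (fun k => s (m (2 * k + 1))) atTop (𝓝 l) := by
    have hb : ∀ k : ℕ, ‖s (m (2 * k + 1)) - l‖ ≤ 1 / ((k:ℝ) + 1) := by
      intro k
      have := hm1 (2 * k + 1)
      rw [if_neg (by rw [Nat.even_add_one]; simpa using even_two_mul k)] at this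
      rw [Real.norm_eq_abs]
      refine this.le.trans ?_
      have h1 : ((k:ℝ) + 1) ≤ ((2 * k + 1 : ℕ) : ℝ) + 1 := by push_cast; linarith
      exact one_div_le_one_div_of_le (by positivity) h1
    have h0 : Tendsto (fun k => s (m (2 * k + 1)) - l) atTop (𝓝 0) :=
      squeeze_zero_norm hb hnk
    have := h0.add_const l
    simpa using this
  -- put everything together
  have hLe : L = (∫ ω, Λe.1 (e ω) ∂μ.toJordanDecomposition.posPart)
      - ∫ ω, Λe.1 (e ω) ∂μ.toJordanDecomposition.negPart := by
    have hsub := hDCT Λe (fun r => 2 * ψe r) hcoordE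
    have hLsub : Tendsto (fun r => s (m (2 * ψe r))) atTop (𝓝 L) :=
      hsE.comp hψe.tendsto_atTop
    exact tendsto_nhds_unique hLsub hsub
  have hlo : l = (∫ ω, Λo.1 (e ω) ∂μ.toJordanDecomposition.posPart)
      - ∫ ω, Λo.1 (e ω) ∂μ.toJordanDecomposition.negPart := by
    have hsub := hDCT Λo (fun r => 2 * ψo r + 1) hcoordO
    have hlsub : Tendsto (fun r => s (m (2 * ψo r + 1))) atTop (𝓝 l) :=
      hsO.comp hψo.tendsto_atTop
    exact tendsto_nhds_unique hlsub hsub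
  have hLl : l = L := by
    have h1 : (∫ ω, Λo.1 (e ω) ∂μ.toJordanDecomposition.posPart)
        = ∫ ω, Λe.1 (e ω) ∂μ.toJordanDecomposition.posPart :=
      integral_congr_ae (Eventually.of_forall fun ω => (hsepeq ω).symm)
    have h2 : (∫ ω, Λo.1 (e ω) ∂μ.toJordanDecomposition.negPart)
        = ∫ ω, Λe.1 (e ω) ∂μ.toJordanDecomposition.negPart :=
      integral_congr_ae (Eventually.of_forall fun ω => (hsepeq ω).symm)
    rw [hLe, hlo, h1, h2]
  exact ⟨L, tendsto_of_liminf_eq_limsup hLl rfl hble hbge⟩
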